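/- Let G be a group, let n ≥ 2 be an integer, and let X = G^n. An element x = (g_1, …, g_n) ∈ X satisfies σ_X(x) = x for every automorphism σ of the free group F_n if and only if g_1 = g_2 = … = g_n = e, where e is the identity element of G. -/

import Mathlib

/-- The word map `σ_X : X → X` associated to an endomorphism `σ` of the free
group `F_n`, where `X = G^n`. -/
def wordMap {G : Type*} [Group G] {n : ℕ}
    (σ : FreeGroup (Fin n) →* FreeGroup (Fin n)) (x : Fin n → G) : Fin n → G :=
  fun i => FreeGroup.lift x (σ (FreeGroup.of i))

/-- For `n ≥ 2`, a tuple `x ∈ G^n` is fixed by the word maps of all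
automorphisms of `F_n` if and only if all its components are the identity. -/
theorem fixed_by_all_aut_iff_one {G : Type*} [Group G] {n : ℕ} (hn : 2 ≤ n)
    (x : Fin n → G) :
    (∀ σ : MulAut (FreeGroup (Fin n)), wordMap σ.toMonoidHom x = x) ↔
      ∀ i, x i = 1 := by
  constructor
  · intro h
    set e0 : Fin n := ⟨0, by omega⟩ with he0
    set e1 : Fin n := ⟨1, by omega⟩ with he1
    have hne : e1 ≠ e0 := by simp [he0, he1, Fin.ext_iff]
    -- all coordinates equal via swap automorphisms
    have hswap : ∀ i j : Fin n, x i = x j := by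
      intro i j
      have := congrFun (h (FreeGroup.freeGroupCongr (Equiv.swap i j))) i
      simpa [wordMap, Equiv.swap_apply_left] using this.symm
    -- Nielsen automorphism
    set f : Fin n → FreeGroup (Fin n) :=
      fun i => if i = e0 then .of e0 * .of e1 else .of i with hf
    set g : Fin n → FreeGroup (Fin n) :=
      fun i => if i = e0 then .of e0 * (.of e1)⁻¹ else .of i with hg
    have h1 : (FreeGroup.lift g).comp (FreeGroup.lift f) = MonoidHom.id _ := by
      apply FreeGroup.ext_hom
      intro i
      by_cases hi : i = e0 <;> simp [hf, hg, hi, hne]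
    have h2 : (FreeGroup.lift f).comp (FreeGroup.lift g) = MonoidHom.id _ := by
      apply FreeGroup.ext_hom
      intro i
      by_cases hi : i = e0 <;> simp [hf, hg, hi, hne]
    let σ : MulAut (FreeGroup (Fin n)) :=
      MonoidHom.toMulEquiv (FreeGroup.lift f) (FreeGroup.lift g) h1 h2
    have key := congrFun (h σ) e0
    have hσ : σ (FreeGroup.of e0) = FreeGroup.of e0 * FreeGroup.of e1 := by
      simp [σ, MonoidHom.toMulEquiv, hf]
    have : x e0 * x e1 = x e0 := by
      simpa [wordMap, hσ] using key
    have he1one : x e1 = 1 := by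
      have := mul_left_cancel (a := x e0) (by simpa using this)
      simpa using this
    intro i
    rw [hswap i e1, he1one]
  · intro h
    intro σ
    funext i
    have : FreeGroup.lift x = FreeGroup.lift (fun _ : Fin n => (1 : G)) := by
      congr 1
      funext j
      exact h j
    have triv : ∀ w : FreeGroup (Fin n),
        FreeGroup.lift (fun _ : Fin n => (1 : G)) w = 1 := by
      intro w
      exact (FreeGroup.lift_unique (1 : FreeGroup (Fin n) →* G) (by simp) (x := w)).symm
    simp [wordMap, this, triv, h i]
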